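/- Let n ≥ 1, let L be a 2n×2n symplectic matrix (Lᵀ J_{2n} L = J_{2n}), and let S be a symmetric real 2n×2n matrix. Then the linear map α on ℝ^{4n} given in 2n×2n block form by the matrix [[−J_{2n} L⁻¹, J_{2n}], [½(I_{2n} + J_{2n} S) L⁻¹, ½(I_{2n} − J_{2n} S)]] is conformal symplectic: there exists a nonzero real constant μ such that Gᵀ J_{4n} G = μ J̃_{4n}, where G is the above block matrix. -/

import Mathlib

open Matrix

/-- For a symplectic matrix `L` and a symmetric matrix `S`, the block matrix
`[[-J L⁻¹, J], [½(I + J S) L⁻¹, ½(I - J S)]]` is conformal symplectic: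
there is a nonzero `μ` with `Gᵀ J₄ₙ G = μ J̃₄ₙ`. -/
theorem generator_type_conformal_symplectic
    (n : ℕ) (hn : 1 ≤ n)
    (L S : Matrix (Fin n ⊕ Fin n) (Fin n ⊕ Fin n) ℝ)
    (J : Matrix (Fin n ⊕ Fin n) (Fin n ⊕ Fin n) ℝ)
    (hJ : J = Matrix.fromBlocks 0 1 (-1) 0)
    (hL : Lᵀ * J * L = J)
    (hS : Sᵀ = S) :
    ∃ μ : ℝ, μ ≠ 0 ∧
      (Matrix.fromBlocks (-(J * L⁻¹)) J
          ((2⁻¹ : ℝ) • ((1 + J * S) * L⁻¹)) ((2⁻¹ : ℝ) • (1 - J * S)))ᵀ *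
        Matrix.fromBlocks 0 1 (-1) 0 *
        Matrix.fromBlocks (-(J * L⁻¹)) J
          ((2⁻¹ : ℝ) • ((1 + J * S) * L⁻¹)) ((2⁻¹ : ℝ) • (1 - J * S)) =
      μ • Matrix.fromBlocks J 0 0 (-J) := by
  have hJJ : J * J = -1 := by
    subst hJ
    simp [Matrix.fromBlocks_multiply, ← Matrix.fromBlocks_one, Matrix.fromBlocks_neg]
  have hJT : Jᵀ = -J := by
    subst hJ
    simp [Matrix.fromBlocks_transpose, Matrix.fromBlocks_neg]
  -- J is invertible, hence det J is a unit
  have hJdet : J.det * (-J).det = 1 := by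
    rw [← Matrix.det_mul, mul_neg, hJJ, neg_neg, Matrix.det_one]
  have hJu : IsUnit J.det := IsUnit.of_mul_eq_one _ hJdet
  -- L is invertible
  have hLdet : L.det * L.det = 1 := by
    have h := congrArg Matrix.det hL
    rw [Matrix.det_mul, Matrix.det_mul, Matrix.det_transpose] at h
    have hJ0 : J.det ≠ 0 := hJu.ne_zero
    have h2 : (L.det * L.det) * J.det = 1 * J.det := by linear_combination h
    simpa using mul_right_cancel₀ hJ0 h2
  have hLu : IsUnit L.det := IsUnit.of_mul_eq_one _ hLdet
  have h1 : L * L⁻¹ = 1 := Matrix.mul_nonsing_inv L hLu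
  -- the inverse is symplectic as well
  have hM : (L⁻¹)ᵀ * J * L⁻¹ = J := by
    calc (L⁻¹)ᵀ * J * L⁻¹ = (L⁻¹)ᵀ * (Lᵀ * J * L) * L⁻¹ := by rw [hL]
      _ = ((L * L⁻¹)ᵀ) * J * (L * L⁻¹) := by
          rw [Matrix.transpose_mul]; noncomm_ring
      _ = J := by rw [h1]; simp
  set M := L⁻¹ with hMdef
  have hM' : Mᵀ * (J * M) = J := by rw [← mul_assoc]; exact hM
  have hJJ' : ∀ X : Matrix (Fin n ⊕ Fin n) (Fin n ⊕ Fin n) ℝ, J * (J * X) = -X := by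
    intro X; rw [← mul_assoc, hJJ]; simp
  refine ⟨1, one_ne_zero, ?_⟩
  rw [one_smul]
  rw [fromBlocks_transpose, fromBlocks_multiply, fromBlocks_multiply, fromBlocks_inj]
  refine ⟨?_, ?_, ?_, ?_⟩ <;>
  · simp only [transpose_smul, transpose_mul, transpose_neg, transpose_sub, transpose_add,
      transpose_one, hJT, hS, mul_zero, zero_mul, mul_one, one_mul, add_zero, zero_add,
      neg_mul, mul_neg, neg_neg, smul_mul_assoc, mul_smul_comm, mul_add, add_mul,
      mul_sub, sub_mul, mul_assoc, hJJ', hJJ, hM', neg_sub, neg_add, sub_neg_eq_add]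
    module
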